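/- Let D > 0, θ > 0, r > 1, 0 < ρ < min{1, r−1}, and let δ be a random variable with CDF F(x) = (x/D)(2 − x/D) on [0, D], F(x) = 1 for x ≥ D. Set a_j = (j−1)r + ρ, b_j = j·r − ρ. If a_m < D/θ < b_m for some 1 ≤ m ≤ N−1, then P(δ ∈ ⋃_{j=1}^{N−1} (θa_j, θb_j)) = (r − 2ρ)(θ/D)(2(m−1) − (rθ/D)(m−1)²) + (1 − θa_m/D)². -/

import Mathlib

open MeasureTheory
set_option maxHeartbeats 1000000

lemma aux_sum (θ D r ρ : ℝ) (n : ℕ) :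
    ∑ j ∈ Finset.Ioc 0 n,
      ((θ * ((j : ℝ) * r - ρ) / D) * (2 - θ * ((j : ℝ) * r - ρ) / D)
        - (θ * (((j : ℝ) - 1) * r + ρ) / D) * (2 - θ * (((j : ℝ) - 1) * r + ρ) / D))
    = (r - 2 * ρ) * (θ / D) * (2 * (n : ℝ) - (r * θ / D) * (n : ℝ) ^ 2) := by
  induction n with
  | zero => simp
  | succ k ih =>
    rw [Finset.sum_Ioc_succ_top (Nat.zero_le _), ih]
    push_cast
    ring

theorem stmt_10 {Ω : Type*} [MeasurableSpace Ω] (P : Measure Ω) [IsProbabilityMeasure P]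
    (D θ r ρ : ℝ) (hD : 0 < D) (hθ : 0 < θ) (hr : 1 < r) (hρ0 : 0 < ρ)
    (hρ : ρ < min 1 (r - 1))
    (δ : Ω → ℝ) (hδ : Measurable δ)
    (hcdf₁ : ∀ x : ℝ, 0 ≤ x → x < D → P {ω | δ ω ≤ x} = ENNReal.ofReal ((x / D) * (2 - x / D)))
    (hcdf₂ : ∀ x : ℝ, D ≤ x → P {ω | δ ω ≤ x} = 1)
    (a b : ℕ → ℝ)
    (ha : ∀ j : ℕ, a j = ((j : ℝ) - 1) * r + ρ)
    (hb : ∀ j : ℕ, b j = (j : ℝ) * r - ρ)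
    (N m : ℕ) (hm1 : 1 ≤ m) (hm2 : m ≤ N - 1) (hN : 2 ≤ N)
    (hlo : a m < D / θ) (hhi : D / θ < b m) :
    P {ω | δ ω ∈ ⋃ j ∈ Finset.Icc 1 (N - 1), Set.Ioo (θ * a j) (θ * b j)}
      = ENNReal.ofReal ((r - 2 * ρ) * (θ / D) * (2 * ((m : ℝ) - 1) - (r * θ / D) * ((m : ℝ) - 1) ^ 2) + (1 - θ * a m / D) ^ 2) := by
  have hD' : D ≠ 0 := ne_of_gt hD
  have hρ1 : ρ < 1 := lt_of_lt_of_le hρ (min_le_left _ _)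
  have hρr : ρ < r - 1 := lt_of_lt_of_le hρ (min_le_right _ _)
  have h2ρ : 2 * ρ < r := by linarith
  -- CDF on [0,D]
  have hG : ∀ x : ℝ, 0 ≤ x → x ≤ D → P {ω | δ ω ≤ x} = ENNReal.ofReal ((x / D) * (2 - x / D)) := by
    intro x hx0 hxD
    rcases lt_or_eq_of_le hxD with h | h
    · exact hcdf₁ x hx0 h
    · subst h; rw [hcdf₂ x le_rfl, div_self hD']; norm_num
  have hPgtD : P {ω | D < δ ω} = 0 := by
    have hc : {ω | D < δ ω} = {ω | δ ω ≤ D}ᶜ := by ext ω; simp [not_le]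
    have hms : MeasurableSet {ω | δ ω ≤ D} := hδ measurableSet_Iic
    rw [hc, measure_compl hms (measure_ne_top _ _), hcdf₂ D le_rfl,
      measure_univ, tsub_self]
  have hunion : ∀ s t : Set Ω, P t = 0 → P (s ∪ t) = P s := by
    intro s t ht
    apply le_antisymm
    · calc P (s ∪ t) ≤ P s + P t := measure_union_le _ _
        _ = P s := by rw [ht, add_zero]
    · exact measure_mono Set.subset_union_left
  -- Ioc measure value
  have hIoc : ∀ c d : ℝ, 0 ≤ c → c ≤ d → d ≤ D →
      P {ω | δ ω ∈ Set.Ioc c d}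
        = ENNReal.ofReal ((d / D) * (2 - d / D) - (c / D) * (2 - c / D)) := by
    intro c d hc0 hcd hdD
    have hset : {ω | δ ω ∈ Set.Ioc c d} = {ω | δ ω ≤ d} \ {ω | δ ω ≤ c} := by
      ext ω
      simp only [Set.mem_setOf_eq, Set.mem_Ioc, Set.mem_diff, not_le]
      tauto
    have hcd1 : c / D ≤ 1 := (div_le_one hD).2 (le_trans hcd hdD)
    have hc0' : (0:ℝ) ≤ c / D := div_nonneg hc0 hD.le
    have hmsc : MeasurableSet {ω | δ ω ≤ c} := hδ measurableSet_Iic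
    have hdiff := measure_diff (μ := P) (s₂ := {ω | δ ω ≤ c}) (s₁ := {ω | δ ω ≤ d})
      (fun ω h => le_trans h hcd) hmsc.nullMeasurableSet (measure_ne_top _ _)
    rw [hset, hdiff, hG d (le_trans hc0 hcd) hdD, hG c hc0 (le_trans hcd hdD),
      ← ENNReal.ofReal_sub]
    nlinarith
  -- no atoms on (0, D]
  have atom : ∀ d : ℝ, 0 < d → d ≤ D → P {ω | δ ω = d} = 0 := by
    intro d hd0 hdD
    have key : ∀ ε : ℝ, 0 < ε → ε ≤ d → P {ω | δ ω = d} ≤ ENNReal.ofReal (2 * ε / D) := by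
      intro ε hε hεd
      have hsub : {ω | δ ω = d} ⊆ {ω | δ ω ∈ Set.Ioc (d - ε) d} := by
        intro ω h
        simp only [Set.mem_setOf_eq] at h ⊢
        rw [h]
        exact ⟨by linarith, le_rfl⟩
      calc P {ω | δ ω = d} ≤ P {ω | δ ω ∈ Set.Ioc (d - ε) d} := measure_mono hsub
        _ = ENNReal.ofReal ((d/D)*(2-d/D) - ((d-ε)/D)*(2-(d-ε)/D)) :=
            hIoc _ _ (by linarith) (by linarith) hdD
        _ ≤ ENNReal.ofReal (2*ε/D) := by
            apply ENNReal.ofReal_le_ofReal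
            have hexp : (d/D)*(2-d/D) - ((d-ε)/D)*(2-(d-ε)/D)
                = 2*ε/D - (2*d*ε - ε^2)/D^2 := by field_simp; ring
            have hnn : (0:ℝ) ≤ (2*d*ε - ε^2)/D^2 := div_nonneg (by nlinarith) (sq_nonneg D)
            rw [hexp]; linarith
    have hseq : ∀ n : ℕ, P {ω | δ ω = d} ≤ ENNReal.ofReal (2 * (d / ((n:ℝ)+1)) / D) := by
      intro n
      apply key
      · positivity
      · apply div_le_self hd0.le
        have : (0:ℝ) ≤ (n:ℝ) := Nat.cast_nonneg n
        linarith
    have htend : Filter.Tendsto (fun n : ℕ => ENNReal.ofReal (2 * (d / ((n:ℝ)+1)) / D))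
        Filter.atTop (nhds 0) := by
      have h1 : Filter.Tendsto (fun n : ℕ => 2 * (d / ((n:ℝ)+1)) / D)
          Filter.atTop (nhds 0) := by
        have h0 := tendsto_one_div_add_atTop_nhds_zero_nat (𝕜 := ℝ)
        have h2 := h0.const_mul (2 * d / D)
        rw [mul_zero] at h2
        convert h2 using 2 with n
        ring
      simpa using ENNReal.tendsto_ofReal h1
    exact le_antisymm (ge_of_tendsto' htend hseq) zero_le
  -- interval structure
  have haj : ∀ j : ℕ, 1 ≤ j → 0 < a j := by
    intro j hj
    rw [ha]
    have : (1:ℝ) ≤ (j:ℝ) := by exact_mod_cast hj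
    nlinarith
  have hab : ∀ j : ℕ, a j < b j := by
    intro j
    rw [ha, hb]
    nlinarith
  have hba : ∀ i j : ℕ, i < j → b i ≤ a j := by
    intro i j hij
    rw [ha, hb]
    have : (i:ℝ) + 1 ≤ (j:ℝ) := by exact_mod_cast hij
    nlinarith
  have hamD : θ * a m < D := by
    rw [mul_comm]; exact (lt_div_iff₀ hθ).mp hlo
  have hDbm : D < θ * b m := by
    rw [mul_comm]; exact (div_lt_iff₀ hθ).mp hhi
  set A : ℕ → Set Ω := fun j => {ω | δ ω ∈ Set.Ioo (θ * a j) (θ * b j)} with hA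
  -- rewrite as finite disjoint union
  have hsetU : {ω | δ ω ∈ ⋃ j ∈ Finset.Icc 1 (N - 1), Set.Ioo (θ * a j) (θ * b j)}
      = ⋃ j ∈ Finset.Icc 1 (N - 1), A j := by
    ext ω; simp [hA]
  have hdisj2 : ∀ i j : ℕ, i < j → Disjoint (A i) (A j) := by
    intro i j hij
    rw [Set.disjoint_left]
    intro ω h1 h2
    simp only [hA, Set.mem_setOf_eq, Set.mem_Ioo] at h1 h2
    have : θ * b i ≤ θ * a j := mul_le_mul_of_nonneg_left (hba i j hij) hθ.le
    linarith [h1.2, h2.1]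
  have hdisj : (↑(Finset.Icc 1 (N - 1)) : Set ℕ).PairwiseDisjoint A := by
    intro i _ j _ hij
    rcases lt_or_gt_of_ne hij with h | h
    · exact hdisj2 i j h
    · exact (hdisj2 j i h).symm
  have hmeas : ∀ j ∈ Finset.Icc 1 (N - 1), MeasurableSet (A j) :=
    fun j _ => hδ measurableSet_Ioo
  rw [hsetU, measure_biUnion_finset hdisj hmeas]
  rw [show Finset.Icc 1 (N - 1) = Finset.Ioc 0 (N - 1) from Finset.Icc_add_one_left_eq_Ioc 0 (N-1)]
  rw [← Finset.sum_Ioc_consecutive (fun j => P (A j)) (Nat.zero_le m) hm2]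
  -- tail vanishes
  have htail : ∑ j ∈ Finset.Ioc m (N - 1), P (A j) = 0 := by
    apply Finset.sum_eq_zero
    intro j hj
    have hj' : m < j := (Finset.mem_Ioc.mp hj).1
    apply measure_mono_null _ hPgtD
    intro ω hω
    simp only [hA, Set.mem_setOf_eq, Set.mem_Ioo] at hω
    simp only [Set.mem_setOf_eq]
    have h1 : θ * b m ≤ θ * a j := mul_le_mul_of_nonneg_left (hba m j hj') hθ.le
    linarith [hω.1]
  rw [htail, add_zero]
  obtain ⟨k, rfl⟩ : ∃ k, m = k + 1 := ⟨m - 1, (Nat.succ_pred_eq_of_pos hm1).symm⟩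
  rw [Finset.sum_Ioc_succ_top (Nat.zero_le k)]
  -- value of the m-th interval
  have hm_pos : (0:ℝ) < θ * a (k+1) := mul_pos hθ (haj _ (by omega))
  have hPm : P (A (k+1)) = ENNReal.ofReal ((1 - θ * a (k+1) / D)^2) := by
    have hsplit : A (k+1) = {ω | δ ω ∈ Set.Ioc (θ * a (k+1)) D} ∪ {ω | δ ω ∈ Set.Ioo D (θ * b (k+1))} := by
      ext ω
      simp only [hA, Set.mem_setOf_eq, Set.mem_Ioo, Set.mem_Ioc, Set.mem_union]
      constructor
      · intro h
        rcases le_or_gt (δ ω) D with h' | h'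
        · exact Or.inl ⟨h.1, h'⟩
        · exact Or.inr ⟨h', h.2⟩
      · rintro (⟨h1, h2⟩ | ⟨h1, h2⟩)
        · exact ⟨h1, lt_of_le_of_lt h2 hDbm⟩
        · exact ⟨lt_trans hamD h1, h2⟩
    rw [hsplit, hunion _ _ (measure_mono_null (fun ω hω => hω.1) hPgtD)]
    rw [hIoc _ _ hm_pos.le hamD.le le_rfl]
    congr 1
    rw [div_self hD']
    ring
  rw [hPm]
  -- values of the first m-1 intervals
  have hhead : ∀ j ∈ Finset.Ioc 0 k, P (A j)
      = ENNReal.ofReal ((θ * b j / D) * (2 - θ * b j / D) - (θ * a j / D) * (2 - θ * a j / D)) := by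
    intro j hj
    obtain ⟨hj1, hjk⟩ := Finset.mem_Ioc.mp hj
    have hjm : j < k + 1 := Nat.lt_succ_of_le hjk
    have hc0 : (0:ℝ) < θ * a j := mul_pos hθ (haj j hj1)
    have hcd : θ * a j < θ * b j := by
      have := hab j
      nlinarith
    have hdD : θ * b j < D := by
      have h1 : θ * b j ≤ θ * a (k+1) := mul_le_mul_of_nonneg_left (hba j (k+1) hjm) hθ.le
      linarith
    have hIocIoo : {ω | δ ω ∈ Set.Ioc (θ * a j) (θ * b j)}
        = A j ∪ {ω | δ ω = θ * b j} := by
      ext ω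
      simp only [hA, Set.mem_setOf_eq, Set.mem_Ioc, Set.mem_Ioo, Set.mem_union]
      constructor
      · rintro ⟨h1, h2⟩
        rcases lt_or_eq_of_le h2 with h | h
        · exact Or.inl ⟨h1, h⟩
        · exact Or.inr h
      · rintro (⟨h1, h2⟩ | h)
        · exact ⟨h1, h2.le⟩
        · exact ⟨by rw [h]; exact hcd, by rw [h]⟩
    have := hIoc (θ * a j) (θ * b j) hc0.le hcd.le hdD.le
    rw [hIocIoo, hunion _ _ (atom _ (by linarith) hdD.le)] at this
    exact this
  rw [Finset.sum_congr rfl hhead]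
  have hgnn : ∀ j ∈ Finset.Ioc 0 k,
      (0:ℝ) ≤ (θ * b j / D) * (2 - θ * b j / D) - (θ * a j / D) * (2 - θ * a j / D) := by
    intro j hj
    obtain ⟨hj1, hjk⟩ := Finset.mem_Ioc.mp hj
    have hjm : j < k + 1 := Nat.lt_succ_of_le hjk
    have hc0 : (0:ℝ) < θ * a j := mul_pos hθ (haj j hj1)
    have hcd : θ * a j < θ * b j := by
      have := hab j
      nlinarith
    have hdD : θ * b j < D := by
      have h1 : θ * b j ≤ θ * a (k+1) := mul_le_mul_of_nonneg_left (hba j (k+1) hjm) hθ.le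
      linarith
    have h1 : θ * a j / D ≤ θ * b j / D := by
      rw [div_le_div_iff₀ hD hD]
      nlinarith
    have h2 : θ * b j / D ≤ 1 := (div_le_one hD).2 hdD.le
    have h3 : (0:ℝ) ≤ θ * a j / D := div_nonneg hc0.le hD.le
    nlinarith
  rw [← ENNReal.ofReal_sum_of_nonneg hgnn,
    ← ENNReal.ofReal_add (Finset.sum_nonneg hgnn) (sq_nonneg _)]
  congr 1
  have hrw : ∀ j ∈ Finset.Ioc 0 k,
      (θ * b j / D) * (2 - θ * b j / D) - (θ * a j / D) * (2 - θ * a j / D)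
      = (θ * ((j : ℝ) * r - ρ) / D) * (2 - θ * ((j : ℝ) * r - ρ) / D)
        - (θ * (((j : ℝ) - 1) * r + ρ) / D) * (2 - θ * (((j : ℝ) - 1) * r + ρ) / D) := by
    intro j _
    rw [ha, hb]
  rw [Finset.sum_congr rfl hrw, aux_sum]
  push_cast
  ring
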